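/- arXiv:2211.01347 — 2 statements merged into one kernel-verified Lean document; each statement's English description precedes it below -/
import Mathlib

section
/- Let x be a point in the completion X̂ of a length space X with x ∉ X. Then for every a > 0 there exists a curve γ : [0,a) → X of finite length such that γ(t) → x in X̂ as t → a. -/
open Set Filter

/-- A metric space is a length space if the distance between any two points is the
infimum of lengths (total variations) of continuous curves joining them. -/
def IsLengthSpace (X : Type*) [MetricSpace X] : Prop :=
  ∀ x y : X, ∀ ε > 0, ∃ γ : ℝ → X, ContinuousOn γ (Set.Icc 0 1) ∧ γ 0 = x ∧ γ 1 = y ∧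
    eVariationOn γ (Set.Icc 0 1) ≤ ENNReal.ofReal (dist x y + ε)

/-- any point of the completion of a length space `X` not lying in `X`
is the limit, for every `a > 0`, of a finite-length curve `γ : [0,a) → X`. -/
theorem stmt_4 (X : Type*) [MetricSpace X] (h : IsLengthSpace X)
    (x : UniformSpace.Completion X)
    (hx : x ∉ Set.range ((↑) : X → UniformSpace.Completion X)) :
    ∀ a > (0:ℝ), ∃ γ : ℝ → X, ContinuousOn γ (Set.Ico 0 a) ∧
      eVariationOn γ (Set.Ico 0 a) < ⊤ ∧
      Filter.Tendsto (fun t => (γ t : UniformSpace.Completion X))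
        (nhdsWithin a (Set.Iio a)) (nhds x) := by
  intro a ha
  classical
  have hd := UniformSpace.Completion.denseRange_coe (α := X)
  have hpow : ∀ n : ℕ, (0:ℝ) < (1/2)^n := fun n => by positivity
  have hex : ∀ n : ℕ, ∃ y : X, dist x (y : UniformSpace.Completion X) < (1/2)^n :=
    fun n => Metric.denseRange_iff.1 hd x _ (hpow n)
  choose u hu using hex
  -- bound on consecutive distances
  have hud : ∀ n : ℕ, dist (u n) (u (n+1)) + (1/2:ℝ)^n ≤ 3 * (1/2)^n := by
    intro n
    have h1 := hu n
    have h2 := hu (n+1)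
    have e : dist (u n) (u (n+1)) = dist ((u n : UniformSpace.Completion X)) (u (n+1)) :=
      (UniformSpace.Completion.dist_eq _ _).symm
    have tri : dist ((u n : UniformSpace.Completion X)) (u (n+1)) ≤
        dist x ((u n : UniformSpace.Completion X)) +
        dist x ((u (n+1) : UniformSpace.Completion X)) := dist_triangle_left _ _ _
    have hp : ((1:ℝ)/2)^(n+1) ≤ (1/2)^n := by
      rw [pow_succ]; nlinarith [hpow n]
    rw [e]; linarith
  -- the connecting curves
  choose Γ hΓc hΓ0 hΓ1 hΓv using fun n => h (u n) (u (n+1)) ((1/2)^n) (hpow n)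
  have hΓv' : ∀ n, eVariationOn (Γ n) (Icc 0 1) ≤ ENNReal.ofReal (3 * (1/2)^n) :=
    fun n => (hΓv n).trans (ENNReal.ofReal_le_ofReal (hud n))
  -- the glued curve on [0, ∞)
  set g : ℝ → X := fun t => Γ ⌊t⌋₊ (t - ⌊t⌋₊) with hg
  have hkey : ∀ (n : ℕ) (t : ℝ), t ∈ Icc (n:ℝ) (n+1) → g t = Γ n (t - n) := by
    intro n t ht
    rcases lt_or_eq_of_le ht.2 with h' | h'
    · have hfl : ⌊t⌋₊ = n := by
        rw [Nat.floor_eq_iff (le_trans (Nat.cast_nonneg n) ht.1)]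
        exact ⟨ht.1, h'⟩
      simp [hg, hfl]
    · have hcast : ((n:ℝ) + 1) = ((n+1 : ℕ) : ℝ) := by push_cast; ring
      have hfl : ⌊t⌋₊ = n + 1 := by
        rw [h', hcast, Nat.floor_natCast]
      have e0 : g t = Γ (n+1) 0 := by
        simp only [hg, hfl]
        rw [h']
        push_cast
        ring_nf
      rw [e0, hΓ0, ← hΓ1 n]
      congr 1
      rw [h']
      ring
  -- continuity of g on each Icc n (n+1)
  have hgIcc : ∀ n : ℕ, ContinuousOn g (Icc (n:ℝ) (n+1)) := by
    intro n
    have hcomp : ContinuousOn (fun t => Γ n (t - n)) (Icc (n:ℝ) (n+1)) := by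
      apply (hΓc n).comp ((continuous_id.sub continuous_const).continuousOn)
      rintro t ⟨ht1, ht2⟩
      show t - (n:ℝ) ∈ Icc (0:ℝ) 1
      exact ⟨by linarith, by linarith⟩
    exact hcomp.congr (fun t ht => hkey n t ht)
  -- continuity of g on Ici 0
  have hgcont : ContinuousOn g (Ici (0:ℝ)) := by
    intro t ht
    have h0t : (0:ℝ) ≤ t := ht
    have hfle : ((⌊t⌋₊ : ℝ)) ≤ t := Nat.floor_le h0t
    have hlt : t < (⌊t⌋₊ : ℝ) + 1 := Nat.lt_floor_add_one t
    rcases eq_or_lt_of_le hfle with heq | hlt'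
    · -- t is a natural number
      rcases Nat.eq_zero_or_pos ⌊t⌋₊ with hn0 | hn0
      · have ht0 : t = 0 := by rw [← heq, hn0]; norm_num
        have cw : ContinuousWithinAt g (Icc (0:ℝ) 1) t := by
          have := hgIcc 0 t (by rw [ht0]; norm_num)
          simpa using this
        refine cw.mono_of_mem_nhdsWithin (Filter.mem_of_superset
          (inter_mem_nhdsWithin (Ici 0) (Iio_mem_nhds (show t < 1 by rw [ht0]; norm_num)))
          (fun y hy => ⟨hy.1, hy.2.le⟩))
      · obtain ⟨m, hm⟩ := Nat.exists_eq_succ_of_ne_zero hn0.ne'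
        have htm : t = (m:ℝ) + 1 := by
          rw [← heq, hm]; push_cast; ring
        have cw1 : ContinuousWithinAt g (Icc (m:ℝ) (m+1)) t := by
          apply hgIcc m
          rw [htm]
          exact ⟨by linarith [Nat.cast_nonneg (α := ℝ) m], le_rfl⟩
        have cw2 : ContinuousWithinAt g (Icc ((m:ℝ)+1) ((m+1)+1)) t := by
          have := hgIcc (m+1) t (by rw [htm]; push_cast; constructor <;> linarith)
          push_cast at this ⊢
          convert this using 2 <;> push_cast <;> ring
        have cw := cw1.union cw2
        rw [Icc_union_Icc_eq_Icc (by linarith) (by linarith)] at cw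
        refine (cw.continuousAt (Icc_mem_nhds ?_ ?_)).continuousWithinAt <;> rw [htm] <;> linarith
    · exact ((hgIcc ⌊t⌋₊ t ⟨hfle, hlt.le⟩).continuousAt (Icc_mem_nhds hlt' hlt)).continuousWithinAt
  -- variation of g on each piece
  have hvar : ∀ n : ℕ, eVariationOn g (Icc (n:ℝ) (n+1)) ≤ ENNReal.ofReal (3 * (1/2)^n) := by
    intro n
    have e1 : eVariationOn g (Icc (n:ℝ) (n+1)) =
        eVariationOn ((Γ n) ∘ (fun t => t - (n:ℝ))) (Icc (n:ℝ) (n+1)) :=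
      eVariationOn.eq_of_eqOn (fun t ht => hkey n t ht)
    have hmono : MonotoneOn (fun t => t - (n:ℝ)) (Icc (n:ℝ) (n+1)) :=
      fun s _ t _ hst => sub_le_sub_right hst _
    rw [e1, eVariationOn.comp_eq_of_monotoneOn (Γ n) _ hmono]
    have him : (fun t => t - (n:ℝ)) '' Icc (n:ℝ) (n+1) = Icc (0:ℝ) 1 := by
      rw [image_sub_const_Icc]
      norm_num
    rw [him]
    exact hΓv' n
  -- variation of g on [0, N]
  have hvarN : ∀ N : ℕ, eVariationOn g (Icc (0:ℝ) N) ≤ ENNReal.ofReal 6 := by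
    have key : ∀ N : ℕ, eVariationOn g (Icc (0:ℝ) N) ≤
        ∑ n ∈ Finset.range N, ENNReal.ofReal (3 * (1/2)^n) := by
      intro N
      induction N with
      | zero =>
        have : (Icc (0:ℝ) ((0:ℕ):ℝ)).Subsingleton := by
          rw [Nat.cast_zero, Icc_self]
          exact subsingleton_singleton
        simp [eVariationOn.subsingleton g this]
      | succ N ih =>
        have hadd := eVariationOn.Icc_add_Icc g (s := univ) (a := (0:ℝ)) (b := (N:ℝ))
          (c := (N:ℝ)+1) (Nat.cast_nonneg N) (by linarith [Nat.cast_nonneg (α := ℝ) N])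
          (mem_univ _)
        simp only [univ_inter] at hadd
        have hc : ((N+1:ℕ):ℝ) = (N:ℝ) + 1 := by push_cast; ring
        rw [hc, ← hadd, Finset.sum_range_succ]
        exact add_le_add ih (hvar N)
    intro N
    refine (key N).trans ?_
    rw [← ENNReal.ofReal_sum_of_nonneg (fun i _ => by positivity)]
    apply ENNReal.ofReal_le_ofReal
    have hs := sum_geometric_two_le N
    calc ∑ n ∈ Finset.range N, 3 * ((1:ℝ)/2)^n
        = 3 * ∑ n ∈ Finset.range N, ((1:ℝ)/2)^n := by rw [Finset.mul_sum]
      _ ≤ 3 * 2 := by linarith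
      _ ≤ 6 := by norm_num
  -- variation of g on Ici 0
  have hIci : eVariationOn g (Ici (0:ℝ)) ≤ ENNReal.ofReal 6 := by
    rw [eVariationOn]
    refine iSup_le ?_
    rintro ⟨n, v, hv, hvs⟩
    refine le_trans ?_ (hvarN ⌈v n⌉₊)
    have hmem : ∀ i, min (v i) (v n) ∈ Icc (0:ℝ) (⌈v n⌉₊ : ℝ) :=
      fun i => ⟨le_min (hvs i) (hvs n), min_le_of_right_le (Nat.le_ceil _)⟩
    have hmono : Monotone (fun i => min (v i) (v n)) :=
      fun i j hij => min_le_min (hv hij) le_rfl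
    refine le_trans (le_of_eq ?_) (eVariationOn.sum_le (f := g) (n := n) hmono hmem)
    apply Finset.sum_congr rfl
    intro i hi
    rw [Finset.mem_range] at hi
    rw [min_eq_left (hv (by omega : i ≤ n)), min_eq_left (hv (by omega : i+1 ≤ n))]
  -- the reparametrization
  set φ : ℝ → ℝ := fun t => t / (a - t) with hφ
  have hφmono : MonotoneOn φ (Ico 0 a) := by
    rintro s ⟨hs0, hsa⟩ t ⟨ht0, hta⟩ hst
    have h1 : 0 < a - s := by linarith
    have h2 : 0 < a - t := by linarith
    simp only [hφ]
    rw [div_le_div_iff₀ h1 h2]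
    nlinarith
  have hφim : φ '' Ico 0 a = Ici 0 := by
    apply Subset.antisymm
    · rintro _ ⟨t, ⟨ht0, hta⟩, rfl⟩
      exact div_nonneg ht0 (by linarith)
    · rintro y (hy : (0:ℝ) ≤ y)
      have h1y : (0:ℝ) < 1 + y := by linarith
      refine ⟨a * y / (1 + y), ⟨by positivity, ?_⟩, ?_⟩
      · rw [div_lt_iff₀ h1y]; nlinarith
      · have hden : a - a * y / (1 + y) = a / (1 + y) := by
          field_simp
          ring
        simp only [hφ]
        rw [hden]
        rw [div_div_div_comm, div_self h1y.ne', div_one, mul_comm, mul_div_assoc,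
          div_self (ne_of_gt ha), mul_one]
  have hφmaps : MapsTo φ (Ico 0 a) (Ici 0) := by
    intro t ht
    rw [← hφim]
    exact mem_image_of_mem φ ht
  have hφcont : ContinuousOn φ (Ico 0 a) := by
    apply ContinuousOn.div continuousOn_id (continuousOn_const.sub continuousOn_id)
    rintro t ⟨ht0, hta⟩
    exact sub_ne_zero.2 (ne_of_gt hta)
  refine ⟨g ∘ φ, hgcont.comp hφcont hφmaps, ?_, ?_⟩
  · rw [eVariationOn.comp_eq_of_monotoneOn g φ hφmono, hφim]
    exact lt_of_le_of_lt hIci ENNReal.ofReal_lt_top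
  · -- the limit
    have h1 : Tendsto (fun t : ℝ => a - t) (nhdsWithin a (Iio a)) (nhdsWithin 0 (Ioi 0)) := by
      rw [tendsto_nhdsWithin_iff]
      constructor
      · have h0 : Tendsto (fun t : ℝ => a - t) (nhds a) (nhds (a - a)) :=
          (continuous_const.sub continuous_id).tendsto a
        simpa using h0.mono_left nhdsWithin_le_nhds
      · filter_upwards [self_mem_nhdsWithin] with t ht
        exact sub_pos.2 (mem_Iio.1 ht)
    have h2 : Tendsto φ (nhdsWithin a (Iio a)) atTop := by
      have hinv : Tendsto (fun t : ℝ => (a - t)⁻¹) (nhdsWithin a (Iio a)) atTop :=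
        tendsto_inv_nhdsGT_zero.comp h1
      have hid : Tendsto (fun t : ℝ => t) (nhdsWithin a (Iio a)) (nhds a) :=
        tendsto_id.mono_left nhdsWithin_le_nhds
      have := hid.pos_mul_atTop ha hinv
      simpa only [hφ, div_eq_mul_inv] using this
    have h3 : Tendsto (fun s : ℝ => ((g s : UniformSpace.Completion X))) atTop (nhds x) := by
      rw [Metric.tendsto_atTop]
      intro ε hε
      obtain ⟨m, hm⟩ := exists_pow_lt_of_lt_one (by linarith : (0:ℝ) < ε/4)
        (by norm_num : (1:ℝ)/2 < 1)
      refine ⟨(m:ℝ), fun t htm => ?_⟩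
      have h0t : (0:ℝ) ≤ t := le_trans (Nat.cast_nonneg m) htm
      set n := ⌊t⌋₊ with hn
      have hnm : m ≤ n := Nat.le_floor htm
      have hfle : ((n:ℝ)) ≤ t := Nat.floor_le h0t
      have hflt : t < (n:ℝ) + 1 := Nat.lt_floor_add_one t
      have hgt : g t = Γ n (t - n) := hkey n t ⟨hfle, hflt.le⟩
      have hmem1 : t - (n:ℝ) ∈ Icc (0:ℝ) 1 := ⟨by linarith, by linarith⟩
      have hed : edist (g t) (u n) ≤ ENNReal.ofReal (3 * (1/2)^n) := by
        rw [hgt, ← hΓ0 n]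
        exact le_trans
          (eVariationOn.edist_le (Γ n) hmem1 (⟨le_rfl, by norm_num⟩ : (0:ℝ) ∈ Icc 0 1))
          (hΓv' n)
      have hd1 : dist (g t) (u n) ≤ 3 * (1/2)^n := by
        rw [edist_dist] at hed
        exact (ENNReal.ofReal_le_ofReal_iff (by positivity)).1 hed
      have tri : dist ((g t : UniformSpace.Completion X)) x ≤
          dist (g t) (u n) + dist ((u n : UniformSpace.Completion X)) x := by
        calc dist ((g t : UniformSpace.Completion X)) x
            ≤ dist ((g t : UniformSpace.Completion X)) (u n) +
              dist ((u n : UniformSpace.Completion X)) x := dist_triangle _ _ _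
          _ = _ := by rw [UniformSpace.Completion.dist_eq]
      have hun : dist ((u n : UniformSpace.Completion X)) x < (1/2)^n := by
        rw [dist_comm]; exact hu n
      have hpowmn : ((1:ℝ)/2)^n ≤ (1/2)^m :=
        pow_le_pow_of_le_one (by norm_num) (by norm_num) hnm
      calc dist ((g t : UniformSpace.Completion X)) x
          ≤ 3*(1/2)^n + (1/2)^n := by linarith
        _ ≤ 4 * ((1:ℝ)/2)^m := by linarith
        _ < ε := by linarith
    exact h3.comp h2
end

section
/- In the unit round sphere S², let pxy be a geodesic triangle with |px| = ε ∈ (0, π/2), ∠pxy = π/2, and |xy| = π − ε. Let pxy' be a mirror copy glued to pxy along the side px, forming a spherical quadrilateral Z. Then the distance in Z between y and y' is greater than π − 2ε. -/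
open Real

/-- The intrinsic (angular) distance between two unit vectors of `ℝ³`, i.e. the
spherical distance on the unit round sphere `S²`. -/
noncomputable def sDist (a b : EuclideanSpace ℝ (Fin 3)) : ℝ :=
  Real.arccos (inner ℝ a b : ℝ)

/-- The angle of the spherical triangle `abc` at the vertex `a`, defined via the
spherical law of cosines. -/
noncomputable def sAngle (a b c : EuclideanSpace ℝ (Fin 3)) : ℝ :=
  Real.arccos ((Real.cos (sDist b c) - Real.cos (sDist a b) * Real.cos (sDist a c)) /
    (Real.sin (sDist a b) * Real.sin (sDist a c)))

/-- The geodesic segment from `P` to `X` inside a region `T` of the unit sphere: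
the points of `T` lying (spherically) between `P` and `X`. -/
def sSegment (T : Set (EuclideanSpace ℝ (Fin 3))) (P X : EuclideanSpace ℝ (Fin 3)) :
    Set (EuclideanSpace ℝ (Fin 3)) :=
  {q ∈ T | sDist P q + sDist q X = sDist P X}

/-- A geodesic metric space: any two points are joined by an isometrically
parametrized geodesic. -/
def IsGeodesicSpace (Y : Type*) [MetricSpace Y] : Prop :=
  ∀ x y : Y, ∃ γ : ℝ → Y, γ 0 = x ∧ γ (dist x y) = y ∧
    ∀ s ∈ Set.Icc (0:ℝ) (dist x y), ∀ t ∈ Set.Icc (0:ℝ) (dist x y),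
      dist (γ s) (γ t) = |s - t|

lemma sDist_comm (a b : EuclideanSpace ℝ (Fin 3)) : sDist a b = sDist b a := by
  unfold sDist; rw [real_inner_comm]

lemma arccos_antitone {u v : ℝ} (h : u ≤ v) : Real.arccos v ≤ Real.arccos u := by
  unfold Real.arccos
  have := Real.monotone_arcsin h
  linarith

lemma sDist_nonneg' (a b : EuclideanSpace ℝ (Fin 3)) : 0 ≤ sDist a b :=
  Real.arccos_nonneg _

lemma inner_abs_le_one {a b : EuclideanSpace ℝ (Fin 3)} (ha : ‖a‖ = 1) (hb : ‖b‖ = 1) :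
    |(inner ℝ a b : ℝ)| ≤ 1 := by
  have := abs_real_inner_le_norm a b
  rwa [ha, hb, mul_one] at this

/-- Triangle inequality for the spherical distance on unit vectors. -/
lemma sDist_triangle {a b c : EuclideanSpace ℝ (Fin 3)}
    (ha : ‖a‖ = 1) (hb : ‖b‖ = 1) (hc : ‖c‖ = 1) :
    sDist a c ≤ sDist a b + sDist b c := by
  set x : ℝ := inner ℝ a b with hx
  set y : ℝ := inner ℝ b c with hy
  set z : ℝ := inner ℝ a c with hz
  have hxb : |x| ≤ 1 := inner_abs_le_one ha hb
  have hyb : |y| ≤ 1 := inner_abs_le_one hb hc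
  have hzb : |z| ≤ 1 := inner_abs_le_one ha hc
  have hx1 : -1 ≤ x ∧ x ≤ 1 := abs_le.1 hxb
  have hy1 : -1 ≤ y ∧ y ≤ 1 := abs_le.1 hyb
  have hz1 : -1 ≤ z ∧ z ≤ 1 := abs_le.1 hzb
  -- key inequality : z ≥ x*y - √(1-x²) √(1-y²)
  set a' : EuclideanSpace ℝ (Fin 3) := a - x • b with ha'
  set c' : EuclideanSpace ℝ (Fin 3) := c - y • b with hc'
  have hbb : (inner ℝ b b : ℝ) = 1 := by
    rw [real_inner_self_eq_norm_sq, hb]; norm_num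
  have hinner : (inner ℝ a' c' : ℝ) = z - x * y := by
    simp only [ha', hc', inner_sub_left, inner_sub_right, real_inner_smul_left,
      real_inner_smul_right, hbb]
    ring
  have hna : ‖a'‖ ^ 2 = 1 - x ^ 2 := by
    rw [← real_inner_self_eq_norm_sq]
    simp only [ha', inner_sub_left, inner_sub_right, real_inner_smul_left,
      real_inner_smul_right, hbb]
    have h6 : (inner ℝ a a : ℝ) = 1 := by rw [real_inner_self_eq_norm_sq, ha]; norm_num
    rw [h6, real_inner_comm a b, ← hx]; ring
  have hnc : ‖c'‖ ^ 2 = 1 - y ^ 2 := by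
    rw [← real_inner_self_eq_norm_sq]
    simp only [hc', inner_sub_left, inner_sub_right, real_inner_smul_left,
      real_inner_smul_right, hbb]
    have h6 : (inner ℝ c c : ℝ) = 1 := by rw [real_inner_self_eq_norm_sq, hc]; norm_num
    rw [h6, real_inner_comm b c, ← hy]; ring
  have hnav : ‖a'‖ = Real.sqrt (1 - x ^ 2) := by
    rw [← hna, Real.sqrt_sq (norm_nonneg _)]
  have hncv : ‖c'‖ = Real.sqrt (1 - y ^ 2) := by
    rw [← hnc, Real.sqrt_sq (norm_nonneg _)]
  have hkey : x * y - Real.sqrt (1 - x ^ 2) * Real.sqrt (1 - y ^ 2) ≤ z := by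
    have hcs : |(inner ℝ a' c' : ℝ)| ≤ ‖a'‖ * ‖c'‖ := abs_real_inner_le_norm a' c'
    have := (abs_le.1 hcs).1
    rw [hinner, hnav, hncv] at this
    linarith
  -- conclude
  unfold sDist
  rw [← hx, ← hy, ← hz]
  by_cases hcase : π ≤ Real.arccos x + Real.arccos y
  · exact le_trans (Real.arccos_le_pi z) hcase
  · push_neg at hcase
    have hsum0 : 0 ≤ Real.arccos x + Real.arccos y :=
      add_nonneg (Real.arccos_nonneg _) (Real.arccos_nonneg _)
    have hcosab : Real.cos (Real.arccos x + Real.arccos y)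
        = x * y - Real.sqrt (1 - x ^ 2) * Real.sqrt (1 - y ^ 2) := by
      rw [Real.cos_add, Real.cos_arccos hx1.1 hx1.2, Real.cos_arccos hy1.1 hy1.2,
        Real.sin_arccos, Real.sin_arccos]
    have hle : Real.cos (Real.arccos x + Real.arccos y) ≤ z := by
      rw [hcosab]; exact hkey
    calc Real.arccos z ≤ Real.arccos (Real.cos (Real.arccos x + Real.arccos y)) :=
          arccos_antitone hle
      _ = Real.arccos x + Real.arccos y := Real.arccos_cos hsum0 hcase.le

/-- let `Z` be the disc obtained by gluing two isometric copies (via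
`ι`, `ι'`) of the spherical triangle `T = PXY` — with `|PX| = ε ∈ (0,π/2)`, right angle
at `X`, `|XY| = π − ε` — along the common side `PX`. Then `dist_Z(ι Y, ι' Y) > π − 2ε`. -/
theorem stmt_8 (ε : ℝ) (hε : ε ∈ Set.Ioo 0 (π / 2))
    (Z : Type*) [MetricSpace Z] (hZ : IsGeodesicSpace Z)
    (T : Set (EuclideanSpace ℝ (Fin 3))) (hT : ∀ v ∈ T, ‖v‖ = 1)
    (P X Y : EuclideanSpace ℝ (Fin 3)) (hP : P ∈ T) (hX : X ∈ T) (hY : Y ∈ T)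
    (hpx : sDist P X = ε) (hangx : sAngle X P Y = π / 2) (hxy : sDist X Y = π - ε)
    (ι ι' : EuclideanSpace ℝ (Fin 3) → Z)
    (hι : ∀ a ∈ T, ∀ b ∈ T, dist (ι a) (ι b) = sDist a b)
    (hι' : ∀ a ∈ T, ∀ b ∈ T, dist (ι' a) (ι' b) = sDist a b)
    (hagree : ∀ q ∈ sSegment T P X, ι q = ι' q)
    (hcover : ι '' T ∪ ι' '' T = Set.univ)
    (hclosed : IsClosed (ι '' T)) (hclosed' : IsClosed (ι' '' T))
    (hinter : ι '' T ∩ ι' '' T = ι '' sSegment T P X) :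
    π - 2 * ε < dist (ι Y) (ι' Y) := by
  obtain ⟨hε0, hε2⟩ := hε
  set L : ℝ := dist (ι Y) (ι' Y) with hL
  have hL0 : 0 ≤ L := dist_nonneg
  obtain ⟨γ, hγ0, hγL, hγiso⟩ := hZ (ι Y) (ι' Y)
  -- the clamped geodesic is continuous
  set g : ℝ → ℝ := fun t => min (max t 0) L with hg
  have hglip : LipschitzWith 1 g := (LipschitzWith.id.max_const 0).min_const L
  have hgmem : ∀ t, g t ∈ Set.Icc (0 : ℝ) L := fun t =>
    ⟨le_min (le_max_right _ _) hL0, min_le_right _ _⟩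
  set f : ℝ → Z := fun t => γ (g t) with hf
  have hflip : LipschitzWith 1 f := by
    apply LipschitzWith.of_dist_le_mul
    intro s t
    have := hγiso (g s) (hgmem s) (g t) (hgmem t)
    simp only [hf]
    rw [this]
    calc |g s - g t| = dist (g s) (g t) := (Real.dist_eq _ _).symm
      _ ≤ _ := hglip.dist_le_mul s t
  have hfcont : Continuous f := hflip.continuous
  have hfIcc : ∀ t ∈ Set.Icc (0 : ℝ) L, f t = γ t := by
    intro t ht
    simp only [hf, hg]
    rw [max_eq_left ht.1, min_eq_left ht.2]
  -- connectedness : the geodesic meets the glued segment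
  have hcross : ∃ t ∈ Set.Icc (0 : ℝ) L, f t ∈ ι '' T ∩ ι' '' T := by
    have hpc : IsPreconnected (Set.Icc (0 : ℝ) L) := isPreconnected_Icc
    have := (isPreconnected_closed_iff.1 hpc) (f ⁻¹' (ι '' T)) (f ⁻¹' (ι' '' T))
      (hclosed.preimage hfcont) (hclosed'.preimage hfcont)
      (by intro t _; have : f t ∈ ι '' T ∪ ι' '' T := by rw [hcover]; trivial
          exact this)
      ⟨0, Set.left_mem_Icc.2 hL0, by
        show f 0 ∈ ι '' T
        rw [hfIcc 0 (Set.left_mem_Icc.2 hL0), hγ0]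
        exact ⟨Y, hY, rfl⟩⟩
      ⟨L, Set.right_mem_Icc.2 hL0, by
        show f L ∈ ι' '' T
        rw [hfIcc L (Set.right_mem_Icc.2 hL0), hL, hγL]
        exact ⟨Y, hY, rfl⟩⟩
    obtain ⟨t, ht, htu, htv⟩ := this
    exact ⟨t, ht, htu, htv⟩
  obtain ⟨t, ht, htmem⟩ := hcross
  rw [hinter] at htmem
  obtain ⟨q, hqseg, hqι⟩ := htmem
  obtain ⟨hqT, hqsum⟩ := hqseg
  have hqι' : ι q = ι' q := hagree q ⟨hqT, hqsum⟩
  have hγt : γ t = ι q := by rw [← hfIcc t ht, hqι]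
  -- distance computation
  have h1 : dist (γ 0) (γ t) = t := by
    rw [hγiso 0 (Set.left_mem_Icc.2 hL0) t ht]
    rw [abs_of_nonpos (by linarith [ht.1])]; ring
  have h2 : dist (γ t) (γ L) = L - t := by
    rw [hγiso t ht L (Set.right_mem_Icc.2 hL0)]
    rw [abs_of_nonpos (by linarith [ht.2])]; ring
  have hsplit : dist (ι Y) (ι q) + dist (ι' q) (ι' Y) = L := by
    rw [← hγ0, ← hγt, ← hqι']
    have : dist (ι q) (ι' Y) = dist (γ t) (γ L) := by rw [hγt, hL, hγL]
    rw [this, h1, h2]; ring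
  have hd1 : dist (ι Y) (ι q) = sDist Y q := hι Y hY q hqT
  have hd2 : dist (ι' q) (ι' Y) = sDist q Y := hι' q hqT Y hY
  -- lower bound on sDist Y q
  have hXq : sDist X q ≤ ε := by
    have h := sDist_nonneg' P q
    rw [hpx] at hqsum
    rw [sDist_comm]; linarith
  have htri : sDist X Y ≤ sDist X q + sDist q Y :=
    sDist_triangle (hT X hX) (hT q hqT) (hT Y hY)
  have hqY : π - 2 * ε ≤ sDist q Y := by
    rw [hxy] at htri; linarith
  have hπε : 0 < π - 2 * ε := by linarith
  have hYq : sDist Y q = sDist q Y := sDist_comm Y q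
  have hLval : L = sDist Y q + sDist q Y := by rw [← hd1, ← hd2, hsplit]
  calc π - 2 * ε < 2 * (π - 2 * ε) := by linarith
    _ ≤ sDist Y q + sDist q Y := by rw [hYq]; linarith
    _ = L := hLval.symm
    _ = dist (ι Y) (ι' Y) := hL
end
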